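/- arXiv:1809.04726 — 2 statements merged into one kernel-verified Lean document; each statement's English description precedes it below -/
import Mathlib

section
/- Let u ∈ ℝ^d and let λ_1 ≥ λ_2 ≥ ⋯ ≥ λ_d ≥ 0. Define x ∈ ℝ^d by x_k = u_k² and y ∈ ℝ^d by y_k = λ_k² u_k² / (∑_{m=1}^d λ_m² u_m²), normalized so that ∑ y_k = ∑ x_k (i.e., y_k = (∑_m u_m²) · λ_k² u_k² / (∑_m λ_m² u_m²)). Assume ∑_m λ_m² u_m² > 0. Then y ⪰ x, i.e., for every 1 ≤ j ≤ d, ∑_{k=1}^j y_k ≥ ∑_{k=1}^j x_k, and ∑_{k=1}^d y_k = ∑_{k=1}^d x_k. -/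
theorem majorization_after_scaling (d : ℕ) (u lam : ℕ → ℝ)
    (hmono : ∀ i j, i ≤ j → j < d → lam j ≤ lam i)
    (hnonneg : ∀ i < d, 0 ≤ lam i)
    (hpos : 0 < ∑ m ∈ Finset.range d, lam m ^ 2 * u m ^ 2)
    (x y : ℕ → ℝ)
    (hx : ∀ k, x k = u k ^ 2)
    (hy : ∀ k, y k = (∑ m ∈ Finset.range d, u m ^ 2) * (lam k ^ 2 * u k ^ 2) /
      (∑ m ∈ Finset.range d, lam m ^ 2 * u m ^ 2)) :
    (∀ j, 1 ≤ j → j ≤ d →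
      ∑ k ∈ Finset.range j, x k ≤ ∑ k ∈ Finset.range j, y k) ∧
    ∑ k ∈ Finset.range d, y k = ∑ k ∈ Finset.range d, x k := by
  set T := ∑ m ∈ Finset.range d, lam m ^ 2 * u m ^ 2 with hT
  set S := ∑ m ∈ Finset.range d, u m ^ 2 with hS
  constructor
  · intro j hj1 hjd
    simp only [hx, hy]
    rw [← Finset.sum_div, ← Finset.mul_sum, le_div_iff₀ hpos]
    have hsplit : Finset.range d = Finset.range j ∪ Finset.Ico j d := by
      rw [Finset.range_eq_Ico, Finset.range_eq_Ico, Finset.Ico_union_Ico_eq_Ico (Nat.zero_le j) hjd]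
    have hdisj : Disjoint (Finset.range j) (Finset.Ico j d) := by
      rw [Finset.range_eq_Ico]; exact Finset.Ico_disjoint_Ico_consecutive 0 j d
    have hTsplit : T = (∑ m ∈ Finset.range j, lam m ^ 2 * u m ^ 2)
        + ∑ m ∈ Finset.Ico j d, lam m ^ 2 * u m ^ 2 := by
      rw [hT, hsplit, Finset.sum_union hdisj]
    have hSsplit : S = (∑ m ∈ Finset.range j, u m ^ 2)
        + ∑ m ∈ Finset.Ico j d, u m ^ 2 := by
      rw [hS, hsplit, Finset.sum_union hdisj]
    rw [hTsplit, hSsplit]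
    ring_nf
    have key : (∑ k ∈ Finset.range j, u k ^ 2) * (∑ m ∈ Finset.Ico j d, lam m ^ 2 * u m ^ 2)
        ≤ (∑ m ∈ Finset.Ico j d, u m ^ 2) * (∑ k ∈ Finset.range j, lam k ^ 2 * u k ^ 2) := by
      rw [Finset.sum_mul_sum, Finset.sum_mul_sum]
      rw [Finset.sum_comm (s := Finset.Ico j d)]
      apply Finset.sum_le_sum
      intro k hk
      apply Finset.sum_le_sum
      intro m hm
      simp only [Finset.mem_range] at hk
      simp only [Finset.mem_Ico] at hm
      have hlam : lam m ≤ lam k := hmono k m (le_trans (le_of_lt hk) hm.1) hm.2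
      have hk0 : 0 ≤ lam k := hnonneg k (lt_of_lt_of_le hk (le_trans hm.1 (le_of_lt hm.2)))
      have hm0 : 0 ≤ lam m := hnonneg m hm.2
      have h2 : lam m ^ 2 ≤ lam k ^ 2 := by nlinarith
      have hu1 : 0 ≤ u k ^ 2 := sq_nonneg _
      have hu2 : 0 ≤ u m ^ 2 := sq_nonneg _
      nlinarith [mul_le_mul_of_nonneg_right h2 (mul_nonneg hu1 hu2)]
    nlinarith
  · simp only [hy, hx]
    rw [← Finset.sum_div, ← Finset.mul_sum, mul_div_assoc,
      div_self (ne_of_gt hpos), mul_one]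
end

section
/- Let u_1, …, u_n ∈ ℝ^d be nonzero with ∑_i u_i u_iᵀ ⪯ (1+4ε)I, and suppose M = diag(λ) with λ_1 ≥ ⋯ ≥ λ_d ≥ 0 satisfies ∑_i (d/n)(Mu_i/‖Mu_i‖)(Mu_i/‖Mu_i‖)ᵀ = I, with (1−γ)(d/n) ≤ ‖u_i‖² ≤ (1+γ)(d/n) for all i. Define w̃_i = ‖u_i‖ · Mu_i/‖Mu_i‖. Then ∑_{i=1}^n ‖u_i − w̃_i‖² ≤ (4ε + γ)·d(d+1) ≤ 2(4ε+γ)d². -/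
noncomputable def eucNorm {d : ℕ} (v : Fin d → ℝ) : ℝ := Real.sqrt (∑ j, v j ^ 2)

theorem card_tail (d k : ℕ) : (Finset.univ.filter (fun j : Fin d => k ≤ (j:ℕ))).card = d - k := by
  have h : ((Finset.univ.filter (fun j : Fin d => k ≤ (j:ℕ))).map Fin.valEmbedding).card
      = ((Finset.Iio d).filter (fun j => k ≤ j)).card := by
    rw [← Fin.map_valEmbedding_univ, Finset.filter_map]; rfl
  rw [Finset.card_map] at h
  have h2 : ((Finset.Iio d).filter (fun j => k ≤ j)) = Finset.Ico k d := by
    ext x; simp only [Finset.mem_filter, Finset.mem_Iio, Finset.mem_Ico]; omega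
  rw [h, h2, Nat.card_Ico]

theorem card_tailnot (d k : ℕ) :
    (Finset.univ.filter (fun j : Fin d => ¬ (j:ℕ) < k)).card = d - k := by
  have h : (Finset.univ.filter (fun j : Fin d => ¬ (j:ℕ) < k))
      = (Finset.univ.filter (fun j : Fin d => k ≤ (j:ℕ))) := by
    apply Finset.filter_congr; intro j _; simp [not_lt]
  rw [h, card_tail]

theorem core_bound (d n : ℕ) (β : ℝ) (hβ : 0 ≤ β) (e : Fin n → Fin d → ℝ)
    (hrow0 : ∀ i, ∑ j, e i j = 0)
    (hthresh : ∀ (i : Fin n) (k : ℕ), k < d →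
      (∀ j : Fin d, (j:ℕ) ≤ k → 0 ≤ e i j) ∨ (∀ j : Fin d, k ≤ (j:ℕ) → e i j ≤ 0))
    (hcol : ∀ j : Fin d, ∑ i, (- e i j) ≤ β) :
    ∑ i, ∑ j, max (- e i j) 0 ≤ β * ((d:ℝ) * ((d:ℝ) - 1)) / 2 := by
  set S : ℕ → ℝ := fun k =>
    ∑ i, ∑ j ∈ Finset.univ.filter (fun j : Fin d => (j:ℕ) < k), max (e i j) 0 with hS
  set N : ℕ → ℝ := fun k =>
    ∑ i, ∑ j ∈ Finset.univ.filter (fun j : Fin d => (j:ℕ) < k), max (- e i j) 0 with hN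
  have hkey : ∀ i j, max (e i j) 0 - max (- e i j) 0 = e i j := by
    intro i j; rcases le_total (e i j) 0 with h|h
    · rw [max_eq_right h, max_eq_left (by linarith)]; ring
    · rw [max_eq_left h, max_eq_right (by linarith)]; ring
  have habs : ∀ i, ∑ j, max (- e i j) 0 = ∑ j, max (e i j) 0 := by
    intro i
    have h2 : ∑ j, (max (e i j) 0 - max (- e i j) 0) = 0 := by
      rw [Finset.sum_congr rfl (fun j _ => hkey i j), hrow0 i]
    rw [Finset.sum_sub_distrib] at h2; linarith
  have hSN : ∀ k : ℕ, k ≤ d → S k ≤ N k + β * ((d:ℝ) - (k:ℝ)) := by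
    intro k hk
    have hkey' : ∀ i,
        (∑ j ∈ Finset.univ.filter (fun j : Fin d => (j:ℕ) < k), max (e i j) 0)
        - (∑ j ∈ Finset.univ.filter (fun j : Fin d => (j:ℕ) < k), max (- e i j) 0)
        = ∑ j ∈ Finset.univ.filter (fun j : Fin d => ¬ (j:ℕ) < k), (- e i j) := by
      intro i
      rw [← Finset.sum_sub_distrib]
      rw [Finset.sum_congr rfl (fun j _ => hkey i j)]
      have h2 := Finset.sum_filter_add_sum_filter_not Finset.univ
        (fun j : Fin d => (j:ℕ) < k) (e i)
      rw [hrow0 i] at h2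
      rw [Finset.sum_neg_distrib]
      linarith
    have h4 : S k - N k
        = ∑ j ∈ Finset.univ.filter (fun j : Fin d => ¬ (j:ℕ) < k), ∑ i, (- e i j) := by
      calc S k - N k
          = ∑ i, ((∑ j ∈ Finset.univ.filter (fun j : Fin d => (j:ℕ) < k), max (e i j) 0)
            - (∑ j ∈ Finset.univ.filter (fun j : Fin d => (j:ℕ) < k), max (- e i j) 0)) := by
            simp only [hS, hN]; rw [Finset.sum_sub_distrib]
        _ = ∑ i, ∑ j ∈ Finset.univ.filter (fun j : Fin d => ¬ (j:ℕ) < k), (- e i j) :=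
            Finset.sum_congr rfl (fun i _ => hkey' i)
        _ = ∑ j ∈ Finset.univ.filter (fun j : Fin d => ¬ (j:ℕ) < k), ∑ i, (- e i j) :=
            Finset.sum_comm
    have h5 : ∑ j ∈ Finset.univ.filter (fun j : Fin d => ¬ (j:ℕ) < k), ∑ i, (- e i j)
        ≤ ∑ j ∈ Finset.univ.filter (fun j : Fin d => ¬ (j:ℕ) < k), β :=
      Finset.sum_le_sum (fun j _ => hcol j)
    have h6 : ∑ _j ∈ Finset.univ.filter (fun j : Fin d => ¬ (j:ℕ) < k), (β:ℝ)
        = ((d - k : ℕ) : ℝ) * β := by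
      rw [Finset.sum_const, card_tailnot d k, nsmul_eq_mul]
    have h7 : ((d - k : ℕ):ℝ) = (d:ℝ) - (k:ℝ) := by
      rw [Nat.cast_sub hk]
    rw [h6, h7, mul_comm] at h5
    linarith [h4, h5]
  have hstep : ∀ k : ℕ, k < d → N (k+1) ≤ S k := by
    intro k hk
    simp only [hN, hS]
    apply Finset.sum_le_sum
    intro i _
    rcases hthresh i k hk with hpos | hneg
    · have hz : ∀ j ∈ Finset.univ.filter (fun j : Fin d => (j:ℕ) < k+1),
          max (- e i j) 0 = 0 := by
        intro j hj
        rw [Finset.mem_filter] at hj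
        have h1 := hpos j (Nat.lt_succ_iff.mp hj.2)
        exact max_eq_right (by linarith)
      rw [Finset.sum_eq_zero hz]
      exact Finset.sum_nonneg (fun j _ => le_max_right _ _)
    · have hz : ∀ j : Fin d, ¬ ((j:ℕ) < k) → max (e i j) 0 = 0 := fun j hj =>
        max_eq_right (hneg j (not_lt.mp hj))
      calc ∑ j ∈ Finset.univ.filter (fun j : Fin d => (j:ℕ) < k+1), max (- e i j) 0
          ≤ ∑ j, max (- e i j) 0 :=
            Finset.sum_le_sum_of_subset_of_nonneg (Finset.filter_subset _ _)
              (fun j _ _ => le_max_right _ _)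
        _ = ∑ j, max (e i j) 0 := habs i
        _ = ∑ j ∈ Finset.univ.filter (fun j : Fin d => (j:ℕ) < k), max (e i j) 0 :=
            (Finset.sum_subset (Finset.filter_subset _ _)
              (fun j _ hj => hz j (by simpa using hj))).symm
  have hind : ∀ k : ℕ, k ≤ d → S k ≤ β * ((k:ℝ) * (2*(d:ℝ) - (k:ℝ) - 1)) / 2 := by
    intro k
    induction k with
    | zero =>
      intro _
      have h0 : S 0 = 0 := by
        simp only [hS]
        apply Finset.sum_eq_zero
        intro i _
        apply Finset.sum_eq_zero
        intro j hj
        rw [Finset.mem_filter] at hj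
        exact absurd hj.2 (Nat.not_lt_zero _)
      rw [h0]; norm_num
    | succ k ih =>
      intro hk1
      have hk : k < d := Nat.lt_of_succ_le hk1
      have h1 := hSN (k+1) hk1
      have h2 := hstep k hk
      have h3 := ih (le_of_lt hk)
      have hc : ((k+1:ℕ):ℝ) = (k:ℝ) + 1 := by push_cast; ring
      rw [hc] at h1
      have hid : β * (((k:ℝ)+1) * (2*(d:ℝ) - ((k:ℝ)+1) - 1)) / 2
          = β * ((k:ℝ) * (2*(d:ℝ) - (k:ℝ) - 1)) / 2 + β * ((d:ℝ) - ((k:ℝ)+1)) := by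
        ring
      rw [hc]
      linarith [h1, h2, h3]
  have hfil : (Finset.univ.filter (fun j : Fin d => (j:ℕ) < d)) = Finset.univ := by
    apply Finset.filter_true_of_mem
    intro j _
    exact j.isLt
  have hNS : ∑ i, ∑ j, max (- e i j) 0 = S d := by
    simp only [hS]
    apply Finset.sum_congr rfl
    intro i _
    rw [hfil, habs i]
  have hd := hind d le_rfl
  have hid2 : β * ((d:ℝ) * (2*(d:ℝ) - (d:ℝ) - 1)) / 2 = β * ((d:ℝ) * ((d:ℝ) - 1)) / 2 := by
    ring
  rw [hNS]
  linarith [hd]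

noncomputable def Pv {d n : ℕ} (u : Fin n → (Fin d → ℝ)) (i : Fin n) : ℝ := ∑ j, u i j ^ 2

noncomputable def rv {d n : ℕ} (lam : Fin d → ℝ) (u : Fin n → (Fin d → ℝ)) (i : Fin n) : ℝ :=
  ∑ j, (lam j * u i j) ^ 2

noncomputable def ev {d n : ℕ} (lam : Fin d → ℝ) (u : Fin n → (Fin d → ℝ))
    (i : Fin n) (j : Fin d) : ℝ :=
  Pv u i * (lam j ^ 2 * u i j ^ 2 / rv lam u i) - u i j ^ 2

theorem dist_to_radial_isotropic (d n : ℕ) (ε γ : ℝ) (hε : 0 ≤ ε) (hγ : 0 ≤ γ)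
    (u : Fin n → (Fin d → ℝ)) (hu : ∀ i, u i ≠ 0)
    (hupper : (((1 + 4 * ε) • (1 : Matrix (Fin d) (Fin d) ℝ)) -
      ∑ i, Matrix.vecMulVec (u i) (u i)).PosSemidef)
    (lam : Fin d → ℝ)
    (hmono : ∀ i j : Fin d, i ≤ j → lam j ≤ lam i)
    (hlam : ∀ j, 0 ≤ lam j)
    (M : Matrix (Fin d) (Fin d) ℝ) (hM : M = Matrix.diagonal lam)
    (hMu : ∀ i, M.mulVec (u i) ≠ 0)
    (hiso : ∑ i, ((d : ℝ) / n) •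
        Matrix.vecMulVec ((eucNorm (M.mulVec (u i)))⁻¹ • M.mulVec (u i))
          ((eucNorm (M.mulVec (u i)))⁻¹ • M.mulVec (u i)) =
      (1 : Matrix (Fin d) (Fin d) ℝ))
    (hlow : ∀ i, (1 - γ) * ((d : ℝ) / n) ≤ ∑ j, (u i j) ^ 2)
    (hhigh : ∀ i, ∑ j, (u i j) ^ 2 ≤ (1 + γ) * ((d : ℝ) / n))
    (w : Fin n → (Fin d → ℝ))
    (hw : ∀ i, w i = (eucNorm (u i) * (eucNorm (M.mulVec (u i)))⁻¹) • M.mulVec (u i)) :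
    ∑ i, ∑ j, (u i j - w i j) ^ 2 ≤ (4 * ε + γ) * d * (d + 1) ∧
    (4 * ε + γ) * d * (d + 1) ≤ 2 * (4 * ε + γ) * d ^ 2 := by
  have hsecond : (4 * ε + γ) * d * (d + 1) ≤ 2 * (4 * ε + γ) * d ^ 2 := by
    have h1 : (0:ℝ) ≤ 4 * ε + γ := by linarith
    have h2 : (d:ℝ) ≤ (d:ℝ) ^ 2 := by
      rcases Nat.eq_zero_or_pos d with h | h
      · subst h; norm_num
      · have : (1:ℝ) ≤ (d:ℝ) := by exact_mod_cast h
        nlinarith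
    nlinarith
  refine ⟨?_, hsecond⟩
  have hmv : ∀ i j, M.mulVec (u i) j = lam j * u i j := fun i j => by
    rw [hM, Matrix.mulVec_diagonal]
  have hPnn : ∀ i, 0 ≤ Pv u i := fun i => Finset.sum_nonneg (fun j _ => sq_nonneg _)
  have hPl : ∀ i, (1 - γ) * ((d:ℝ)/n) ≤ Pv u i := fun i => hlow i
  have hr2pos : ∀ i, 0 < rv lam u i := by
    intro i
    have h : ∃ j, lam j * u i j ≠ 0 := by
      by_contra hcon
      push_neg at hcon
      apply hMu i
      funext j
      simp [hmv i j, hcon j]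
    obtain ⟨j0, hj0⟩ := h
    exact Finset.sum_pos' (fun j _ => sq_nonneg _)
      ⟨j0, Finset.mem_univ _, lt_of_le_of_ne (sq_nonneg _) (Ne.symm (pow_ne_zero 2 hj0))⟩
  have henorm : ∀ i, eucNorm (M.mulVec (u i)) = Real.sqrt (rv lam u i) := by
    intro i
    unfold eucNorm rv
    congr 1
    exact Finset.sum_congr rfl (fun j _ => by rw [hmv i j])
  have hisod : ∀ j : Fin d,
      ∑ i, ((d:ℝ)/n) * (lam j ^ 2 * u i j ^ 2 / rv lam u i) = 1 := by
    intro j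
    have h := congrFun (congrFun hiso j) j
    rw [Matrix.sum_apply, Matrix.one_apply_eq] at h
    rw [← h]
    apply Finset.sum_congr rfl
    intro i _
    rw [Matrix.smul_apply, Matrix.vecMulVec_apply, smul_eq_mul]
    congr 1
    rw [Pi.smul_apply, smul_eq_mul, hmv i j, henorm i]
    have ha : Real.sqrt (rv lam u i) ≠ 0 :=
      ne_of_gt (Real.sqrt_pos.mpr (hr2pos i))
    have hs : Real.sqrt (rv lam u i) * Real.sqrt (rv lam u i) = rv lam u i :=
      Real.mul_self_sqrt (le_of_lt (hr2pos i))
    field_simp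
    rw [Real.sq_sqrt (le_of_lt (hr2pos i)), mul_div_assoc, div_self (ne_of_gt (hr2pos i))]
    ring
  have hcolp : ∀ j : Fin d, ∑ i, u i j ^ 2 ≤ 1 + 4 * ε := by
    intro j
    have h : (0:ℝ) ≤ (((1 + 4 * ε) • (1 : Matrix (Fin d) (Fin d) ℝ)) -
        ∑ i, Matrix.vecMulVec (u i) (u i)) j j := by
      have := hupper.dotProduct_mulVec_nonneg (Pi.single j 1)
      simpa [dotProduct, Matrix.mulVec, Pi.single_apply] using this
    rw [Matrix.sub_apply, Matrix.smul_apply, Matrix.one_apply_eq, Matrix.sum_apply] at h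
    have h2 : ∑ i, Matrix.vecMulVec (u i) (u i) j j = ∑ i, u i j ^ 2 :=
      Finset.sum_congr rfl (fun i _ => by rw [Matrix.vecMulVec_apply]; ring)
    rw [h2, smul_eq_mul, mul_one] at h
    linarith
  have hrow0 : ∀ i, ∑ j, ev lam u i j = 0 := by
    intro i
    unfold ev
    rw [Finset.sum_sub_distrib]
    have h1 : ∑ j, Pv u i * (lam j ^ 2 * u i j ^ 2 / rv lam u i) = Pv u i := by
      rw [← Finset.mul_sum, ← Finset.sum_div]
      have h2 : ∑ j, lam j ^ 2 * u i j ^ 2 = rv lam u i := by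
        unfold rv; exact Finset.sum_congr rfl (fun j _ => by ring)
      rw [h2, div_self (ne_of_gt (hr2pos i)), mul_one]
    rw [h1]
    unfold Pv
    ring
  have heq : ∀ i j, ev lam u i j
      = u i j ^ 2 * (Pv u i * lam j ^ 2 - rv lam u i) / rv lam u i := by
    intro i j
    unfold ev
    rw [eq_div_iff (ne_of_gt (hr2pos i)), ← mul_div_assoc, sub_mul,
      div_mul_cancel₀ _ (ne_of_gt (hr2pos i))]
    ring
  have hthresh : ∀ (i : Fin n) (k : ℕ), k < d →
      (∀ j : Fin d, (j:ℕ) ≤ k → 0 ≤ ev lam u i j) ∨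
      (∀ j : Fin d, k ≤ (j:ℕ) → ev lam u i j ≤ 0) := by
    intro i k hk
    by_cases hcase : rv lam u i ≤ Pv u i * lam ⟨k, hk⟩ ^ 2
    · left
      intro j hj
      have hle : j ≤ (⟨k, hk⟩ : Fin d) := hj
      have hm := hmono j ⟨k, hk⟩ hle
      have hsq : lam ⟨k, hk⟩ ^ 2 ≤ lam j ^ 2 := by nlinarith [hlam j, hlam ⟨k, hk⟩]
      have h1 : rv lam u i ≤ Pv u i * lam j ^ 2 :=
        le_trans hcase (by nlinarith [hPnn i])
      rw [heq i j]
      exact div_nonneg (mul_nonneg (sq_nonneg _) (by linarith)) (le_of_lt (hr2pos i))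
    · right
      push_neg at hcase
      intro j hj
      have hle : (⟨k, hk⟩ : Fin d) ≤ j := hj
      have hm := hmono ⟨k, hk⟩ j hle
      have hsq : lam j ^ 2 ≤ lam ⟨k, hk⟩ ^ 2 := by nlinarith [hlam j, hlam ⟨k, hk⟩]
      have h1 : Pv u i * lam j ^ 2 ≤ rv lam u i :=
        le_trans (by nlinarith [hPnn i]) (le_of_lt hcase)
      rw [heq i j]
      have hnum : u i j ^ 2 * (Pv u i * lam j ^ 2 - rv lam u i) ≤ 0 := by
        nlinarith [sq_nonneg (u i j)]
      exact div_nonpos_iff.mpr (Or.inr ⟨hnum, le_of_lt (hr2pos i)⟩)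
  have hcol : ∀ j : Fin d, ∑ i, (- ev lam u i j) ≤ 4 * ε + γ := by
    intro j
    have h1 : ∑ i, (- ev lam u i j)
        = ∑ i, u i j ^ 2 - ∑ i, Pv u i * (lam j ^ 2 * u i j ^ 2 / rv lam u i) := by
      rw [← Finset.sum_sub_distrib]
      exact Finset.sum_congr rfl (fun i _ => by unfold ev; ring)
    have h2 : (1:ℝ) - γ ≤ ∑ i, Pv u i * (lam j ^ 2 * u i j ^ 2 / rv lam u i) := by
      calc (1:ℝ) - γ
          = (1 - γ) * ∑ i, ((d:ℝ)/n) * (lam j ^ 2 * u i j ^ 2 / rv lam u i) := by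
            rw [hisod j, mul_one]
        _ = ∑ i, (1 - γ) * ((d:ℝ)/n) * (lam j ^ 2 * u i j ^ 2 / rv lam u i) := by
            rw [Finset.mul_sum]
            exact Finset.sum_congr rfl (fun i _ => by ring)
        _ ≤ ∑ i, Pv u i * (lam j ^ 2 * u i j ^ 2 / rv lam u i) :=
            Finset.sum_le_sum (fun i _ => mul_le_mul_of_nonneg_right (hPl i)
              (div_nonneg (by positivity) (le_of_lt (hr2pos i))))
    have h3 := hcolp j
    rw [h1]
    linarith
  have htot : ∀ i, ∑ j, (u i j - w i j) ^ 2 ≤ 2 * ∑ j, max (- ev lam u i j) 0 := by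
    intro i
    set t := Real.sqrt (Pv u i) * (Real.sqrt (rv lam u i))⁻¹ with ht
    have ht0 : 0 ≤ t := mul_nonneg (Real.sqrt_nonneg _) (inv_nonneg.mpr (Real.sqrt_nonneg _))
    have hw' : ∀ j, w i j = t * (lam j * u i j) := by
      intro j
      rw [hw i]
      rw [Pi.smul_apply, smul_eq_mul, hmv i j, henorm i]
      have he2 : eucNorm (u i) = Real.sqrt (Pv u i) := rfl
      rw [he2]
    have ht2 : t ^ 2 * rv lam u i = Pv u i := by
      rw [ht]
      have h1 : Real.sqrt (Pv u i) ^ 2 = Pv u i := Real.sq_sqrt (hPnn i)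
      have h2 : Real.sqrt (rv lam u i) ^ 2 = rv lam u i := Real.sq_sqrt (le_of_lt (hr2pos i))
      rw [mul_pow, inv_pow, h1, h2, mul_assoc,
        inv_mul_cancel₀ (ne_of_gt (hr2pos i)), mul_one]
    have hrv : ∑ j, lam j ^ 2 * u i j ^ 2 = rv lam u i := by
      unfold rv; exact Finset.sum_congr rfl (fun j _ => by ring)
    have hsum1 : ∑ j, (u i j - w i j) ^ 2
        = 2 * ∑ j, (u i j ^ 2 - t * lam j * u i j ^ 2)
          - (∑ j, u i j ^ 2 - t ^ 2 * ∑ j, lam j ^ 2 * u i j ^ 2) := by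
      calc ∑ j, (u i j - w i j) ^ 2
          = ∑ j, (2 * (u i j ^ 2 - t * lam j * u i j ^ 2)
              - (u i j ^ 2 - t ^ 2 * (lam j ^ 2 * u i j ^ 2))) :=
            Finset.sum_congr rfl (fun j _ => by rw [hw' j]; ring)
        _ = 2 * ∑ j, (u i j ^ 2 - t * lam j * u i j ^ 2)
            - (∑ j, u i j ^ 2 - t ^ 2 * ∑ j, lam j ^ 2 * u i j ^ 2) := by
            rw [Finset.sum_sub_distrib, Finset.sum_sub_distrib, ← Finset.mul_sum, ← Finset.mul_sum]
    have hz : ∑ j, u i j ^ 2 - t ^ 2 * ∑ j, lam j ^ 2 * u i j ^ 2 = 0 := by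
      rw [hrv, ht2]
      unfold Pv
      ring
    have hpt : ∀ j, u i j ^ 2 - t * lam j * u i j ^ 2 ≤ max (- ev lam u i j) 0 := by
      intro j
      have hme : - ev lam u i j = u i j ^ 2 - t ^ 2 * lam j ^ 2 * u i j ^ 2 := by
        unfold ev
        have hc : Pv u i * (lam j ^ 2 * u i j ^ 2 / rv lam u i)
            = t ^ 2 * lam j ^ 2 * u i j ^ 2 := by
          rw [← ht2, mul_assoc, mul_comm (rv lam u i) (lam j ^ 2 * u i j ^ 2 / rv lam u i),
            div_mul_cancel₀ _ (ne_of_gt (hr2pos i)), ← mul_assoc]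
        rw [hc]
        ring
      rw [hme]
      have hx0 : 0 ≤ t * lam j := mul_nonneg ht0 (hlam j)
      rcases le_total (t * lam j) 1 with hx | hx
      · refine le_max_iff.mpr (Or.inl ?_)
        nlinarith [mul_nonneg (mul_nonneg hx0 (sub_nonneg.mpr hx)) (sq_nonneg (u i j))]
      · refine le_max_iff.mpr (Or.inr ?_)
        nlinarith [mul_nonneg (sub_nonneg.mpr hx) (sq_nonneg (u i j))]
    rw [hsum1, hz, sub_zero]
    have hle := Finset.sum_le_sum (fun j (_ : j ∈ Finset.univ) => hpt j)
    linarith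
  have hβ : (0:ℝ) ≤ 4 * ε + γ := by linarith
  have hcore := core_bound d n (4 * ε + γ) hβ (ev lam u) hrow0 hthresh hcol
  have hdnn : (0:ℝ) ≤ (d:ℝ) := Nat.cast_nonneg d
  calc ∑ i, ∑ j, (u i j - w i j) ^ 2
      ≤ ∑ i, 2 * ∑ j, max (- ev lam u i j) 0 := Finset.sum_le_sum (fun i _ => htot i)
    _ = 2 * ∑ i, ∑ j, max (- ev lam u i j) 0 := by rw [Finset.mul_sum]
    _ ≤ 2 * ((4 * ε + γ) * ((d:ℝ) * ((d:ℝ) - 1)) / 2) := by linarith [hcore]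
    _ ≤ (4 * ε + γ) * d * (d + 1) := by nlinarith [mul_nonneg hβ hdnn]
end
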